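/- If www is a cube factor of the infinite Fibonacci word, then |w| = f_m for some m ≥ 2; conversely, for every m ≥ 2 there exists a cube factor www of the Fibonacci word with |w| = f_m. -/

import Mathlib

/-- Finite Fibonacci words: `fibF 0 = a`, `fibF 1 = ab`,
`fibF (m+2) = fibF (m+1) ++ fibF m`, with letters `a = false`, `b = true`.
Each `fibF m` is a prefix of the next, so a word is a factor of the infinite
Fibonacci word `𝔽` iff it is a factor (infix) of some `fibF m`. -/
def fibF : ℕ → List Bool
  | 0 => [false]
  | 1 => [false, true]
  | n + 2 => fibF (n + 1) ++ fibF n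

/-- A word is a factor of the infinite Fibonacci word. -/
def IsFactorF (w : List Bool) : Prop := ∃ m, w <:+: fibF m

/-- The prefix `𝔽[1,n]` of the infinite Fibonacci word of length `n`
(`fibF n` has length `fib (n+2) ≥ n`). -/
def fibPrefix (n : ℕ) : List Bool := (fibF n).take n

set_option linter.unreachableTactic false
set_option linter.unusedTactic false

def phi (l : List Bool) : List Bool := l.flatMap (fun c => if c then [false] else [false, true])

@[simp] lemma phi_nil : phi [] = [] := rfl
@[simp] lemma phi_cons (c v) : phi (c :: v) = (if c then [false] else [false,true]) ++ phi v := by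
  simp [phi]
@[simp] lemma phi_append (u v : List Bool) : phi (u ++ v) = phi u ++ phi v := by simp [phi]

lemma phi_eq_nil {v : List Bool} (h : phi v = []) : v = [] := by
  cases v with
  | nil => rfl
  | cons c t => cases c <;> simp at h

lemma phi_head {v : List Bool} (h : v ≠ []) : ∃ t, phi v = false :: t := by
  cases v with
  | nil => exact absurd rfl h
  | cons c t => cases c <;> simp

lemma fibF_succ : ∀ n, fibF (n+1) = phi (fibF n) := by
  intro n
  induction n using Nat.strong_induction_on with
  | _ n IH =>
    match n with
    | 0 => rfl
    | 1 => rfl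
    | (m+2) =>
      show fibF (m+2+1) = phi (fibF (m+1) ++ fibF m)
      rw [phi_append, ← IH (m+1) (by omega), ← IH m (by omega)]
      rfl

lemma fibF_ne_nil (n : ℕ) : fibF n ≠ [] := by
  match n with
  | 0 => simp [fibF]
  | 1 => simp [fibF]
  | (m+2) => simp [fibF, fibF_ne_nil (m+1)]

lemma length_fibF : ∀ n, (fibF n).length = Nat.fib (n+2) := by
  intro n
  induction n using Nat.strong_induction_on with
  | _ n IH =>
    match n with
    | 0 => rfl
    | 1 => rfl
    | (m+2) =>
      show (fibF (m+1) ++ fibF m).length = Nat.fib (m+4)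
      rw [List.length_append, IH (m+1) (by omega), IH m (by omega)]
      have h2 : Nat.fib (m+4) = Nat.fib (m+2) + Nat.fib (m+3) := Nat.fib_add_two
      show Nat.fib (m+3) + Nat.fib (m+2) = Nat.fib (m+4)
      omega

lemma phi_length (v : List Bool) : (phi v).length = v.length + v.count false := by
  induction v with
  | nil => simp
  | cons c t ih => cases c <;> simp [ih] <;> omega

lemma phi_count (v : List Bool) : (phi v).count false = v.length := by
  induction v with
  | nil => simp
  | cons c t ih => cases c <;> simp [ih]

lemma phi_inj : ∀ {u v : List Bool}, phi u = phi v → u = v := by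
  intro u
  induction u with
  | nil => intro v h; exact (phi_eq_nil h.symm).symm
  | cons c t ih =>
    intro v h
    cases v with
    | nil => exact absurd (phi_eq_nil h) (by simp)
    | cons d s =>
      cases c <;> cases d <;> simp at h
      · exact by rw [ih h]
      · -- c = false: [f,t]++ = [f]++ : phi s = true :: ...
        exfalso
        rcases s with _ | ⟨e, s'⟩
        · simp at h
        · cases e <;> simp at h
      · exfalso
        rcases t with _ | ⟨e, t'⟩
        · simp at h
        · cases e <;> simp at h
      · rw [ih h]

/-- every `true` in a phi-image is preceded by `false` -/
lemma PT : ∀ (v x y : List Bool), phi v = x ++ true :: y → ∃ x', x = x' ++ [false] := by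
  intro v
  induction v with
  | nil => intro x y h; exfalso; have := congrArg List.length h; simp at this
  | cons c t ih =>
    intro x y h
    cases c
    · -- block [false, true]
      simp only [phi_cons, if_neg Bool.false_ne_true] at h
      rcases x with _ | ⟨e, x'⟩
      · simp at h
      · rcases x' with _ | ⟨e', x''⟩
        · simp at h
          exact ⟨[], by simp [h.1]⟩
        · simp at h
          obtain ⟨he, he', h3⟩ := h
          obtain ⟨x3, hx3⟩ := ih x'' y h3
          exact ⟨e :: e' :: x3, by simp [hx3]⟩
    · simp at h
      rcases x with _ | ⟨e, x'⟩
      · simp at h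
      · simp at h
        obtain ⟨he, h2⟩ := h
        obtain ⟨x3, hx3⟩ := ih x' y h2
        exact ⟨e :: x3, by simp [hx3]⟩

lemma no_tt_phi (v : List Bool) : ¬ ([true, true] <:+: phi v) := by
  rintro ⟨x, y, h⟩
  have h' : phi v = (x ++ [true]) ++ true :: y := by simpa [List.append_assoc] using h.symm
  obtain ⟨x', hx'⟩ := PT v (x ++ [true]) y h'
  have := congrArg (fun l => l.getLast?) hx'
  simp at this

lemma no_tt_fibF (m : ℕ) : ¬ ([true, true] <:+: fibF m) := by
  match m with
  | 0 => rintro ⟨x, y, h⟩; have := congrArg List.length h; simp [fibF] at this; omega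
  | (n+1) => rw [fibF_succ]; exact no_tt_phi _

/-- parsing lemma: a cut at a block boundary splits the preimage -/
lemma P : ∀ (v x z : List Bool), phi v = x ++ z →
    (z = [] ∨ z.head? = some false ∨ x.getLast? = some true) →
    ∃ v1 v2, v = v1 ++ v2 ∧ phi v1 = x ∧ phi v2 = z := by
  intro v
  induction v with
  | nil =>
    intro x z h _
    obtain ⟨hx, hz⟩ := List.append_eq_nil_iff.mp h.symm
    exact ⟨[], [], rfl, by simp [hx], by simp [hz]⟩
  | cons c t ih =>
    intro x z h hcut
    rcases x with _ | ⟨e, x'⟩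
    · exact ⟨[], c :: t, by simp, rfl, by simpa using h⟩
    cases c
    · -- block [false, true]
      simp only [phi_cons, if_neg Bool.false_ne_true] at h
      rcases x' with _ | ⟨e', x''⟩
      · -- x = [e]; z = true :: phi t ; contradictions
        exfalso
        simp at h
        obtain ⟨he, hz⟩ := h
        rcases hcut with h1 | h2 | h3
        · rw [h1] at hz; simp at hz
        · rw [← hz] at h2; simp at h2
        · simp [he] at h3
      · simp at h
        obtain ⟨he, he', h3⟩ := h
        rcases x'' with _ | ⟨e'', x'''⟩
        · -- x = [f,t], phi t = z : direct
          refine ⟨[false], t, rfl, by simp [he, he'], by simpa using h3⟩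
        · have hcut' : z = [] ∨ z.head? = some false ∨ (e'' :: x''').getLast? = some true := by
            rcases hcut with h1 | h2 | h4
            · exact Or.inl h1
            · exact Or.inr (Or.inl h2)
            · refine Or.inr (Or.inr ?_)
              simpa using h4
          obtain ⟨v1, v2, hv, hv1, hv2⟩ := ih (e'' :: x''') z h3 hcut'
          exact ⟨false :: v1, v2, by simp [hv], by simp [he, he', hv1], hv2⟩
    · -- block [false]
      simp at h
      obtain ⟨he, h2⟩ := h
      have hcut' : z = [] ∨ z.head? = some false ∨ x'.getLast? = some true := by
        rcases hcut with h1 | h2' | h4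
        · exact Or.inl h1
        · exact Or.inr (Or.inl h2')
        · rcases x' with _ | ⟨a, x''⟩
          · simp [he] at h4
          · exact Or.inr (Or.inr (by simpa using h4))
      rcases x' with _ | ⟨a, x''⟩
      · exact ⟨[true], t, rfl, by simp [he], by simpa using h2⟩
      obtain ⟨v1, v2, hv, hv1, hv2⟩ := ih (a :: x'') z h2 hcut'
      exact ⟨true :: v1, v2, by simp [hv], by simp [he, hv1], hv2⟩

lemma no_fff_phi {v : List Bool} (hv : ¬ ([true,true] <:+: v)) :
    ¬ ([false,false,false] <:+: phi v) := by
  rintro ⟨x, y, h⟩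
  obtain ⟨v1, v2, hsplit, hv1, hv2⟩ := P v x ([false,false,false] ++ y)
    (by simpa [List.append_assoc] using h.symm) (Or.inr (Or.inl rfl))
  rcases v2 with _ | ⟨c, v2'⟩
  · simp at hv2
  cases c
  · simp at hv2
  · simp at hv2
    rcases v2' with _ | ⟨c', v2''⟩
    · simp at hv2
    cases c'
    · simp at hv2
    · exact hv ⟨v1, v2'', by simp [hsplit]⟩

lemma no_fff_fibF (m : ℕ) : ¬ ([false,false,false] <:+: fibF m) := by
  match m with
  | 0 => rintro ⟨x, y, h⟩; have := congrArg List.length h; simp [fibF] at this; omega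
  | (n+1) => rw [fibF_succ]; exact no_fff_phi (no_tt_fibF n)

lemma E : ∀ (p r y : List Bool), p ≠ [] → phi r = phi p ++ y →
    ∃ c d, r = p.dropLast ++ c :: d := by
  intro p
  induction p with
  | nil => intro r y h; exact absurd rfl h
  | cons ℓ p' ih =>
    intro r y _ h
    rcases p' with _ | ⟨ℓ', p''⟩
    · -- p = [ℓ] : just need r ≠ []
      rcases r with _ | ⟨c, d⟩
      · exfalso; cases ℓ <;> simp at h
      · exact ⟨c, d, by simp⟩
    · set q : List Bool := ℓ' :: p'' with hq
      have hqne : q ≠ [] := by simp [hq]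
      rcases r with _ | ⟨e, r'⟩
      · exfalso; cases ℓ <;> simp at h
      have hdl : (ℓ :: q).dropLast = ℓ :: q.dropLast := by
        simp [hq]
      cases ℓ <;> cases e
      · -- both false
        simp only [phi_cons, if_neg Bool.false_ne_true, List.append_assoc] at h
        have h2 : phi r' = phi q ++ y := by
          simpa using h
        obtain ⟨c, d, hcd⟩ := ih r' y hqne h2
        exact ⟨c, d, by simp [hcd, hdl]⟩
      · -- ℓ = false (block [f,t]), e = true (block [f]) : phi r' = true :: ... contra
        exfalso
        obtain ⟨t2, ht2⟩ := phi_head hqne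
        simp [ht2] at h
        rcases r' with _ | ⟨e', r''⟩
        · simp at h
        · cases e' <;> simp at h
      · exfalso
        obtain ⟨t2, ht2⟩ := phi_head hqne
        simp [ht2] at h
      · -- both true
        simp only [phi_cons, if_pos rfl] at h
        have h2 : phi r' = phi q ++ y := by simpa using h
        obtain ⟨c, d, hcd⟩ := ih r' y hqne h2
        exact ⟨c, d, by simp [hcd, hdl]⟩

lemma exists_concat {l : List Bool} (h : l ≠ []) : ∃ q c, l = q ++ [c] :=
  ⟨l.dropLast, l.getLast h, (List.dropLast_append_getLast h).symm⟩

lemma E' (p w r y : List Bool) (hp : p ≠ []) (hbb : ¬ ([true,true] <:+: p))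
    (hlen : w.length = (phi p).length) (hdl : w.dropLast = (phi p).dropLast)
    (h : phi r = w ++ y) : ∃ c d, r = p.dropLast ++ c :: d := by
  obtain ⟨q, ℓ, rfl⟩ := exists_concat hp
  have hwne : w ≠ [] := by
    intro hw
    subst hw
    cases ℓ <;> simp [phi_append] at hlen
  obtain ⟨w0, c0, rfl⟩ := exists_concat hwne
  have hq : (q ++ [ℓ]).dropLast = q := by simp
  cases ℓ
  · -- block [false, true]
    have hpd : (phi (q ++ [false])).dropLast = phi q ++ [false] := by simp
    have hw0 : w0 = phi q ++ [false] := by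
      rw [← hpd, ← hdl]; simp
    cases c0
    · -- w = phi q ++ [false, false] = phi (q ++ [true]) ++ [false]
      have h2 : phi r = phi (q ++ [true]) ++ (false :: y) := by
        rw [h, hw0]; simp
      obtain ⟨c, d, hcd⟩ := E (q ++ [true]) r (false :: y) (by simp) h2
      exact ⟨c, d, by rw [hcd]; simp [hq]⟩
    · -- w = phi (q ++ [false])
      have h2 : phi r = phi (q ++ [false]) ++ y := by
        rw [h, hw0]; simp
      obtain ⟨c, d, hcd⟩ := E (q ++ [false]) r y (by simp) h2
      exact ⟨c, d, by rw [hcd]⟩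
  · -- block [false]
    have hpd : (phi (q ++ [true])).dropLast = phi q := by simp
    have hw0 : w0 = phi q := by rw [← hpd, ← hdl]; simp
    cases c0
    · -- w = phi (q ++ [true])
      have h2 : phi r = phi (q ++ [true]) ++ y := by rw [h, hw0]; simp
      obtain ⟨c, d, hcd⟩ := E (q ++ [true]) r y (by simp) h2
      exact ⟨c, d, by rw [hcd]⟩
    · -- w = phi q ++ [true]
      exfalso
      rcases q with _ | _
      · -- phi r = true :: y : impossible
        simp at hw0
        rw [hw0] at h
        rcases r with _ | ⟨e, r'⟩
        · simp at h
        · cases e <;> simp at h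
      · rename_i a q0
        obtain ⟨q', ℓ', hq'⟩ := exists_concat (show (a :: q0 : List Bool) ≠ [] by simp)
        cases ℓ'
        · -- phi q ends [f,t]; phi r contains [t,t]
          have hw0' : w0 = phi q' ++ [false, true] := by
            rw [hw0, show (a :: q0 : List Bool) = q' ++ [false] from hq']
            simp
          apply no_tt_phi r
          refine ⟨phi q' ++ [false], y, ?_⟩
          rw [h, hw0']
          simp
        · -- p ends [true, true]
          apply hbb
          refine ⟨q', [], ?_⟩
          rw [show (a :: q0 ++ [true] : List Bool) = (a :: q0) ++ [true] from rfl, hq']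
          simp

def Q (w : List Bool) : Prop :=
  ∃ v' m, v'.length = w.length ∧ v'.dropLast = w.dropLast ∧ (w ++ w ++ v') <:+: fibF m

lemma main : ∀ n (w : List Bool), w.length = n → w ≠ [] → Q w →
    ∃ j, w.length = Nat.fib (j+2) ∧ w.count false = Nat.fib (j+1) := by
  intro n
  induction n using Nat.strong_induction_on with
  | _ n IH =>
  intro w hlen hne hQ
  obtain ⟨v', m, hvl, hvd, x, y, hxy⟩ := hQ
  rcases w with _ | ⟨c, tw⟩
  · exact absurd rfl hne
  by_cases hn1 : tw = []
  · -- n = 1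
    subst hn1
    cases c
    · exact ⟨0, by simp [← hlen], by simp⟩
    · exfalso
      apply no_tt_fibF m
      refine ⟨x, v' ++ y, ?_⟩
      rw [← hxy]; simp
  · -- n ≥ 2
    have htw : 0 < tw.length := List.length_pos_iff.mpr hn1
    have hn2 : 2 ≤ n := by rw [← hlen]; simp; omega
    have key : ∀ (u v'' : List Bool) (m' : ℕ), u.length = n → u.head? = some false →
        v''.length = u.length → v''.dropLast = u.dropLast →
        (u ++ u ++ v'') <:+: fibF m' →
        ∃ j, u.length = Nat.fib (j+2) ∧ u.count false = Nat.fib (j+1) := by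
      intro u v'' m' hulen huh hv2l hv2d ⟨x', y', hxy'⟩
      -- u = false :: tu with tu ≠ []
      rcases u with _ | ⟨c₁, tu⟩
      · simp at hulen; omega
      have hc₁ : c₁ = false := by simpa using huh
      subst hc₁
      have htu : tu ≠ [] := by
        intro h; subst h; simp at hulen; omega
      -- m' = M + 1
      obtain ⟨M, rfl⟩ : ∃ M, m' = M + 1 := by
        cases m' with
        | zero =>
          exfalso
          have := congrArg List.length hxy'
          simp [fibF] at this
          omega
        | succ M => exact ⟨M, rfl⟩
      set u := false :: tu with hu
      have h1 : phi (fibF M) = x' ++ (u ++ (u ++ (v'' ++ y'))) := by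
        rw [← fibF_succ, ← hxy']; simp
      obtain ⟨v1, r2, hsplit1, hv1, hr2⟩ := P (fibF M) x' (u ++ (u ++ (v'' ++ y'))) h1
        (Or.inr (Or.inl (by simp [hu])))
      obtain ⟨p, r3, hsplit2, hp, hr3⟩ := P r2 u (u ++ (v'' ++ y')) hr2
        (Or.inr (Or.inl (by simp [hu])))
      -- v'' starts with false
      have hv2ne : v'' ≠ [] := by
        intro h; subst h; simp at hv2l
      obtain ⟨q2, cl2, hq2⟩ := exists_concat hv2ne
      have hq2d : v''.dropLast = q2 := by rw [hq2]; simp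
      have hv2head : ∃ s, v'' = false :: s := by
        have : q2 = false :: tu.dropLast := by
          rw [← hq2d, hv2d, hu]
          simp [List.dropLast_cons_of_ne_nil htu]
        rw [hq2, this]
        exact ⟨tu.dropLast ++ [cl2], by simp⟩
      obtain ⟨s2, hs2⟩ := hv2head
      obtain ⟨p2, r4, hsplit3, hp2, hr4⟩ := P r3 u (v'' ++ y') hr3
        (Or.inr (Or.inl (by rw [hs2]; simp)))
      have hp2p : p = p2 := phi_inj (hp.trans hp2.symm)
      subst hp2p
      have hpne : p ≠ [] := by
        intro h; subst h; simp [hu] at hp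
      have hfibM : fibF M = v1 ++ (p ++ (p ++ r4)) := by
        rw [hsplit1, hsplit2, hsplit3]
      have hpinf : p <:+: fibF M := ⟨v1, p ++ r4, by rw [hfibM]; simp⟩
      have hbbp : ¬ ([true,true] <:+: p) := fun h => no_tt_fibF M (h.trans hpinf)
      obtain ⟨cc, d, hr4eq⟩ := E' p v'' r4 y' hpne hbbp
        (by rw [hv2l, hp]) (by rw [hv2d, hp]) hr4
      have hplen1 : 0 < p.length := List.length_pos_iff.mpr hpne
      have hQp : Q p := by
        refine ⟨p.dropLast ++ [cc], M, ?_, by simp, v1, d, ?_⟩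
        · simp; omega
        · rw [hfibM, hr4eq]; simp
      have hcnt : 1 ≤ p.count false := by
        by_contra h0
        have h00 : p.count false = 0 := by omega
        have hmem : (false : Bool) ∉ p := List.count_eq_zero.mp h00
        rcases p with _ | ⟨d₁, p₁⟩
        · exact hpne rfl
        have hd₁ : d₁ = true := by
          cases d₁
          · exact absurd (by simp) hmem
          · rfl
        subst hd₁
        rcases p₁ with _ | ⟨d₂, p₂⟩
        · -- p = [true], u = [false] : contradicts n ≥ 2
          have h1u : u.length = 1 := by rw [← hp]; rfl
          omega
        have hd₂ : d₂ = true := by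
          cases d₂
          · exact absurd (by simp) hmem
          · rfl
        subst hd₂
        exact hbbp ⟨[], p₂, by simp⟩
      have hulen' : u.length = p.length + p.count false := by
        rw [← hp, phi_length]
      have hplt : p.length < n := by
        rw [hulen] at hulen'; omega
      obtain ⟨j, hj1, hj2⟩ := IH p.length hplt p rfl hpne hQp
      refine ⟨j + 1, ?_, ?_⟩
      · have hfib : Nat.fib (j+3) = Nat.fib (j+1) + Nat.fib (j+2) :=
          Nat.fib_add_two
        show u.length = Nat.fib (j+3)
        omega
      · show u.count false = Nat.fib (j+2)
        rw [← hp, phi_count, hj1]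
    cases c
    · exact key (false :: tw) v' m hlen rfl hvl hvd ⟨x, y, hxy⟩
    · -- head is true
      obtain ⟨M, rfl⟩ : ∃ M, m = M + 1 := by
        cases m with
        | zero =>
          exfalso
          have := congrArg List.length hxy
          simp [fibF] at this
          omega
        | succ M => exact ⟨M, rfl⟩
      have h3 : phi (fibF M) = x ++ true :: (tw ++ (true :: tw) ++ v' ++ y) := by
        rw [← fibF_succ, ← hxy]; simp
      obtain ⟨x₀, hx₀⟩ := PT _ _ _ h3
      have h4 : phi (fibF M) = (x ++ (true :: tw)) ++ true :: (tw ++ v' ++ y) := by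
        rw [← fibF_succ, ← hxy]; simp
      obtain ⟨z, hz⟩ := PT _ _ _ h4
      have hwne : (true :: tw : List Bool) ≠ [] := by simp
      obtain ⟨w0, cl, hw0⟩ := exists_concat hwne
      have hcl : cl = false := by
        have e1 : (x ++ (true :: tw)).getLast? = some cl := by rw [hw0]; simp
        rw [hz] at e1; simp at e1
        first
        | exact e1
        | exact e1.symm
      subst hcl
      have hvne : v' ≠ [] := by
        intro h; subst h; simp at hvl
      obtain ⟨v'0, cl', hv'0⟩ := exists_concat hvne
      have hv'0w0 : v'0 = w0 := by
        have e2 : v'.dropLast = w0 := by rw [hvd, hw0]; simp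
        rw [hv'0] at e2; simpa using e2
      rw [hv'0w0] at hv'0
      have hkeyinf : ((false :: w0) ++ (false :: w0) ++ (false :: w0)) <:+: fibF (M+1) := by
        refine ⟨x₀, cl' :: y, ?_⟩
        rw [← hxy, hx₀, hw0, hv'0]
        simp
      have hul : (false :: w0).length = n := by
        have e3 := congrArg List.length hw0
        simp at e3
        rw [← hlen]; simp; omega
      obtain ⟨j, hj1, hj2⟩ := key (false :: w0) (false :: w0) (M+1) hul rfl rfl rfl hkeyinf
      refine ⟨j, ?_, ?_⟩
      · have hL : (true :: tw).length = (false :: w0).length := by rw [hw0]; simp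
        exact hL.trans hj1
      · rw [hw0]
        simp at hj2 ⊢
        omega

/-- near-commutation: `s_{n+1} s_n` and `s_n s_{n+1}` differ only in final two letters -/
lemma NC : ∀ n, ∃ (t : List Bool) (a b : Bool),
    fibF (n+1) ++ fibF n = t ++ [a, b] ∧ fibF n ++ fibF (n+1) = t ++ [b, a] := by
  intro n
  induction n with
  | zero => exact ⟨[false], true, false, by decide, by decide⟩
  | succ k ih =>
    obtain ⟨t, a, b, h1, h2⟩ := ih
    refine ⟨fibF (k+1) ++ t, b, a, ?_, ?_⟩
    · show fibF (k+1) ++ fibF k ++ fibF (k+1) = fibF (k+1) ++ t ++ [b, a]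
      rw [List.append_assoc, h2, List.append_assoc]
    · show fibF (k+1) ++ (fibF (k+1) ++ fibF k) = fibF (k+1) ++ t ++ [a, b]
      rw [h1, List.append_assoc]

lemma fib_prefix_swap (k : ℕ) : ∃ z, fibF (k+1) ++ fibF (k+2) = fibF (k+2) ++ z := by
  obtain ⟨t, a, b, h1, h2⟩ := NC (k+1)
  have L2 : (fibF (k+2)).length = Nat.fib (k+4) := length_fibF (k+2)
  have L1 : (fibF (k+1)).length = Nat.fib (k+3) := length_fibF (k+1)
  have hlt : (fibF (k+2)).length ≤ t.length := by
    have e1 := congrArg List.length h1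
    rw [List.length_append, List.length_append, L1, L2] at e1
    simp at e1
    have e2 : Nat.fib (k+4) = Nat.fib (k+2) + Nat.fib (k+3) := Nat.fib_add_two
    have e3 : 2 ≤ Nat.fib (k+3) := by
      have : Nat.fib 3 ≤ Nat.fib (k+3) := Nat.fib_mono (by omega)
      rw [show Nat.fib 3 = 2 from rfl] at this; exact this
    rw [L2]
    omega
  have htake1 : (fibF (k+2) ++ fibF (k+1)).take (fibF (k+2)).length = fibF (k+2) := by
    simp
  have htake2 : (fibF (k+2) ++ fibF (k+1)).take (fibF (k+2)).length
      = (fibF (k+1) ++ fibF (k+2)).take (fibF (k+2)).length := by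
    rw [h1, h2, List.take_append_of_le_length hlt, List.take_append_of_le_length hlt]
  have e : (fibF (k+1) ++ fibF (k+2)).take (fibF (k+2)).length = fibF (k+2) := by
    rw [← htake2]; exact htake1
  have hpre : fibF (k+2) <+: fibF (k+1) ++ fibF (k+2) := by
    have := List.take_prefix (fibF (k+2)).length (fibF (k+1) ++ fibF (k+2))
    rwa [e] at this
  obtain ⟨z, hz⟩ := hpre
  exact ⟨z, hz.symm⟩

lemma cube_exists (k : ℕ) :
    (fibF (k+2) ++ fibF (k+2) ++ fibF (k+2)) <:+: fibF (k+6) := by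
  obtain ⟨z, hz⟩ := fib_prefix_swap k
  have h6 : fibF (k+6) = fibF (k+5) ++ fibF (k+4) := rfl
  have h5 : fibF (k+5) = fibF (k+4) ++ fibF (k+3) := rfl
  have h4 : fibF (k+4) = fibF (k+3) ++ fibF (k+2) := rfl
  have h3 : fibF (k+3) = fibF (k+2) ++ fibF (k+1) := rfl
  have hmid : (fibF (k+2) ++ fibF (k+2) ++ (fibF (k+1) ++ fibF (k+2))) <:+: fibF (k+6) := by
    refine ⟨fibF (k+3), fibF (k+1) ++ fibF (k+2), ?_⟩
    rw [h6, h5, h4, h3]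
    simp [List.append_assoc]
  have hcube : (fibF (k+2) ++ fibF (k+2) ++ fibF (k+2)) <+:
      (fibF (k+2) ++ fibF (k+2) ++ (fibF (k+1) ++ fibF (k+2))) := by
    refine ⟨z, ?_⟩
    rw [hz]
    simp [List.append_assoc]
  exact hcube.isInfix.trans hmid

lemma no_ababab (m : ℕ) : ¬ ([false,true,false,true,false,true] <:+: fibF m) := by
  match m with
  | 0 =>
    rintro ⟨x, y, h⟩
    have := congrArg List.length h
    simp [fibF] at this
    omega
  | (M+1) =>
    rintro ⟨x, y, h⟩
    rw [fibF_succ] at h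
    obtain ⟨v1, v2, hsp, hv1, hv2⟩ := P (fibF M) x ([false,true,false,true,false,true] ++ y)
      (by rw [← h]; simp) (Or.inr (Or.inl rfl))
    obtain ⟨v3, v4, hsp2, hv3, hv4⟩ := P v2 [false,true,false,true,false,true] y hv2
      (Or.inr (Or.inr rfl))
    have hv3' : v3 = [false, false, false] := phi_inj (by rw [hv3]; rfl)
    exact no_fff_fibF M ⟨v1, v4, by rw [hsp, hsp2, hv3']; simp⟩

lemma no_bababa (m : ℕ) : ¬ ([true,false,true,false,true,false] <:+: fibF m) := by
  match m with
  | 0 =>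
    rintro ⟨x, y, h⟩
    have := congrArg List.length h
    simp [fibF] at this
    omega
  | (M+1) =>
    rintro ⟨x, y, h⟩
    rw [fibF_succ] at h
    obtain ⟨x₀, hx₀⟩ := PT (fibF M) x ([false,true,false,true,false] ++ y) (by rw [← h]; simp)
    apply no_ababab (M+1)
    rw [fibF_succ]
    refine ⟨x₀, false :: y, ?_⟩
    rw [← h, hx₀]
    simp

/-- (`f_m = Nat.fib (m + 2)`, so `f_m` for `m ≥ 2` is `Nat.fib (k + 4)`, `k : ℕ`.)
If `www` is a cube factor of `𝔽` then `|w| = f_m` for some `m ≥ 2`, and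
conversely every such length is realized by a cube factor. -/
theorem stmt_10 :
    (∀ w : List Bool, w ≠ [] → IsFactorF (w ++ w ++ w) →
      ∃ k : ℕ, w.length = Nat.fib (k + 4)) ∧
    (∀ k : ℕ, ∃ w : List Bool, w ≠ [] ∧ w.length = Nat.fib (k + 4) ∧
      IsFactorF (w ++ w ++ w)) := by
  constructor
  · rintro w hne ⟨m, hinf⟩
    have hQ : Q w := ⟨w, m, rfl, rfl, hinf⟩
    obtain ⟨j, hj1, hj2⟩ := main w.length w rfl hne hQ
    obtain ⟨x, y, hxy⟩ := hinf
    match j, hj1 with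
    | 0, hj1 =>
      exfalso
      have h1 : w.length = 1 := hj1
      obtain ⟨c, rfl⟩ := List.length_eq_one_iff.mp h1
      cases c
      · exact no_fff_fibF m ⟨x, y, by simp [← hxy]⟩
      · exact no_tt_fibF m ⟨x, true :: y, by simp [← hxy]⟩
    | 1, hj1 =>
      exfalso
      have h2 : w.length = 2 := hj1
      rcases w with _ | ⟨c₁, _ | ⟨c₂, _ | _⟩⟩ <;> simp at h2
      cases c₁ <;> cases c₂
      · exact no_fff_fibF m ⟨x, false :: false :: false :: y, by simp [← hxy]⟩
      · exact no_ababab m ⟨x, y, by simp [← hxy]⟩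
      · exact no_bababa m ⟨x, y, by simp [← hxy]⟩
      · exact no_tt_fibF m ⟨x, true :: true :: true :: true :: y, by simp [← hxy]⟩
    | (i+2), hj1 => exact ⟨i, hj1⟩
  · intro k
    exact ⟨fibF (k+2), fibF_ne_nil _, length_fibF (k+2), k+6, cube_exists k⟩
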